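/- arXiv:1507.05650 — 3 statements merged into one kernel-verified Lean document; each statement's English description precedes it below -/
import Mathlib

section
/- Let m ≥ 1, let w be a weight function on m vertices with cut function δ_w, and let V ⊆ Fin m be a subset with |V| ≥ 3. Then ∑_{I ⊆ V} (−1)^{|I|} · δ_w(I) = 0. -/
/-- A weight function on `m` vertices: symmetric, nonnegative, vanishing on the diagonal. -/
def IsWeight {m : ℕ} (w : Fin m → Fin m → ℝ) : Prop :=
  (∀ i j, w i j = w j i) ∧ (∀ i j, 0 ≤ w i j) ∧ ∀ i, w i i = 0

/-- The cut function of a weight function: `δ_w(I) = ∑_{i ∈ I} ∑_{j ∉ I} w i j`. -/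
def cut {m : ℕ} (w : Fin m → Fin m → ℝ) (I : Finset (Fin m)) : ℝ :=
  ∑ i ∈ I, ∑ j ∈ Iᶜ, w i j

/-- The Bell vector `β_{ij}`: value `1` on subsets containing exactly one of `i, j`, else `0`. -/
def bell {m : ℕ} (i j : Fin m) (I : Finset (Fin m)) : ℝ :=
  if Xor (i ∈ I) (j ∈ I) then 1 else 0


lemma alt_sum_real {α : Type*} [DecidableEq α] {x : Finset α} (h0 : x.Nonempty) :
    ∑ I ∈ x.powerset, (-1 : ℝ) ^ I.card = 0 := by
  have := Finset.sum_powerset_neg_one_pow_card_of_nonempty h0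
  exact_mod_cast congrArg (Int.cast : ℤ → ℝ) this

lemma key {m : ℕ} (V : Finset (Fin m)) (hV : 3 ≤ V.card) (i j : Fin m) :
    ∑ I ∈ V.powerset, (if i ∈ I ∧ j ∉ I then (-1:ℝ)^I.card else 0) = 0 := by
  by_cases hi : i ∈ V
  · by_cases hij : i = j
    · subst hij
      exact Finset.sum_eq_zero fun I _ => by simp [em]
    · have hirm : i ∉ V.erase i := Finset.notMem_erase i V
      have hVe : V = insert i (V.erase i) := (Finset.insert_erase hi).symm
      rw [hVe, Finset.sum_powerset_insert hirm]
      have h1 : ∑ t ∈ (V.erase i).powerset,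
          (if i ∈ t ∧ j ∉ t then (-1:ℝ)^t.card else 0) = 0 := by
        refine Finset.sum_eq_zero fun t ht => ?_
        have : i ∉ t := fun h => hirm (Finset.mem_powerset.1 ht h)
        simp [this]
      rw [h1, zero_add]
      have h2 : ∀ t ∈ (V.erase i).powerset,
          (if i ∈ insert i t ∧ j ∉ insert i t then (-1:ℝ)^(insert i t).card else 0)
            = -(if j ∉ t then (-1:ℝ)^t.card else 0) := by
        intro t ht
        have hit : i ∉ t := fun h => hirm (Finset.mem_powerset.1 ht h)
        rw [Finset.card_insert_of_notMem hit]
        by_cases hj : j ∈ t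
        · simp [hj]
        · simp [hj, Ne.symm hij, pow_succ]
      rw [Finset.sum_congr rfl h2, Finset.sum_neg_distrib, neg_eq_zero]
      set W := V.erase i with hW
      have hWc : 2 ≤ W.card := by
        rw [hW, Finset.card_erase_of_mem hi]; omega
      by_cases hjW : j ∈ W
      · have hjrm : j ∉ W.erase j := Finset.notMem_erase j W
        rw [show W = insert j (W.erase j) from (Finset.insert_erase hjW).symm,
          Finset.sum_powerset_insert hjrm]
        have e1 : ∑ t ∈ (W.erase j).powerset,
            (if j ∉ t then (-1:ℝ)^t.card else 0) = ∑ t ∈ (W.erase j).powerset, (-1:ℝ)^t.card := by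
          refine Finset.sum_congr rfl fun t ht => ?_
          have : j ∉ t := fun h => hjrm (Finset.mem_powerset.1 ht h)
          simp [this]
        have e2 : ∑ t ∈ (W.erase j).powerset,
            (if j ∉ insert j t then (-1:ℝ)^(insert j t).card else 0) = 0 := by
          refine Finset.sum_eq_zero fun t ht => ?_
          simp
        rw [e1, e2, add_zero]
        refine alt_sum_real ?_
        rw [← Finset.card_pos, Finset.card_erase_of_mem hjW]; omega
      · have e1 : ∑ t ∈ W.powerset,
            (if j ∉ t then (-1:ℝ)^t.card else 0) = ∑ t ∈ W.powerset, (-1:ℝ)^t.card := by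
          refine Finset.sum_congr rfl fun t ht => ?_
          have : j ∉ t := fun h => hjW (Finset.mem_powerset.1 ht h)
          simp [this]
        rw [e1]
        refine alt_sum_real ?_
        rw [← Finset.card_pos]; omega
  · refine Finset.sum_eq_zero fun I hI => ?_
    have : i ∉ I := fun h => hi (Finset.mem_powerset.1 hI h)
    simp [this]

lemma cut_eq {m : ℕ} (w : Fin m → Fin m → ℝ) (I : Finset (Fin m)) :
    cut w I = ∑ i : Fin m, ∑ j : Fin m, if i ∈ I ∧ j ∉ I then w i j else 0 := by
  unfold cut
  rw [← Finset.sum_filter_add_sum_filter_not Finset.univ (· ∈ I)]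
  have h1 : Finset.univ.filter (· ∈ I) = I := by ext x; simp
  have h2 : ∀ i : Fin m, (∑ j : Fin m, if i ∈ I ∧ j ∉ I then w i j else 0)
      = if i ∈ I then ∑ j ∈ Iᶜ, w i j else 0 := by
    intro i
    by_cases hi : i ∈ I
    · simp only [hi, true_and, if_true]
      rw [← Finset.sum_filter]
      congr 1
      ext x; simp
    · simp [hi]
  simp only [h2]
  rw [h1]
  simp [Finset.sum_ite_of_true, Finset.sum_filter]
  refine Finset.sum_eq_zero fun x hx => ?_
  simp at hx

/-- The multivariate information equality for cut functions:
for any weight function `w` and any `V` with `|V| ≥ 3`,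
`∑_{I ⊆ V} (−1)^{|I|} δ_w(I) = 0`. -/
theorem multivariate_information_cut (m : ℕ) (hm : 1 ≤ m) (w : Fin m → Fin m → ℝ)
    (hw : IsWeight w) (V : Finset (Fin m)) (hV : 3 ≤ V.card) :
    ∑ I ∈ V.powerset, (-1 : ℝ) ^ I.card * cut w I = 0 := by
  simp only [cut_eq, Finset.mul_sum]
  rw [Finset.sum_comm]
  refine Finset.sum_eq_zero fun i _ => ?_
  rw [Finset.sum_comm]
  refine Finset.sum_eq_zero fun j _ => ?_
  have : ∀ I ∈ V.powerset, (-1:ℝ)^I.card * (if i ∈ I ∧ j ∉ I then w i j else 0)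
      = w i j * (if i ∈ I ∧ j ∉ I then (-1:ℝ)^I.card else 0) := by
    intro I _
    split_ifs <;> ring
  rw [Finset.sum_congr rfl this, ← Finset.mul_sum, key V hV i j, mul_zero]
end

section
/- Let n ≥ 1 and let s : Finset (Fin n) → ℝ satisfy s(∅) = 0. Then there exists a weight function w on n+1 vertices such that s(I) = δ_w(I) for every I ⊆ Fin n (with I viewed as a subset of Fin (n+1) via the natural embedding) if and only if the following three conditions hold: (1) for all distinct i, j ∈ Fin n, s({i}) + s({j}) ≥ s({i, j}); (2) for all i ∈ Fin n, s({i}) + s(Fin n) ≥ s(Fin n \ {i}); (3) for every V ⊆ Fin n with |V| ≥ 3, ∑_{I ⊆ V} (−1)^{|I|} s(I) = 0. -/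
lemma cut_expand {m : ℕ} (w : Fin m → Fin m → ℝ) (J : Finset (Fin m)) :
    cut w J = ∑ p : Fin m, ∑ q : Fin m, if p ∈ J ∧ q ∉ J then w p q else 0 := by
  have h1 : ∀ p : Fin m, (∑ q : Fin m, if p ∈ J ∧ q ∉ J then w p q else 0)
      = if p ∈ J then ∑ q ∈ Jᶜ, w p q else 0 := by
    intro p
    by_cases hp : p ∈ J
    · simp only [hp, true_and, if_true]
      simp only [show ∀ q : Fin m, (q ∉ J) = (q ∈ Jᶜ) from fun q => by simp]
      rw [Finset.sum_ite_mem, Finset.univ_inter]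
    · simp [hp]
  rw [Finset.sum_congr rfl (fun p _ => h1 p), Finset.sum_ite_mem, Finset.univ_inter, cut]

lemma sum_sum_nonneg {m : ℕ} (g : Fin m → Fin m → ℝ)
    (h : ∀ p q, 0 ≤ g p q + g q p) : 0 ≤ ∑ p : Fin m, ∑ q : Fin m, g p q := by
  have h2 : 0 ≤ ∑ p : Fin m, ∑ q : Fin m, (g p q + g q p) :=
    Finset.sum_nonneg fun p _ => Finset.sum_nonneg fun q _ => h p q
  have h3 : ∑ p : Fin m, ∑ q : Fin m, (g p q + g q p)
      = (∑ p : Fin m, ∑ q : Fin m, g p q) + ∑ p : Fin m, ∑ q : Fin m, g q p := by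
    rw [← Finset.sum_add_distrib]
    exact Finset.sum_congr rfl fun p _ => Finset.sum_add_distrib
  have h4 : ∑ p : Fin m, ∑ q : Fin m, g q p = ∑ p : Fin m, ∑ q : Fin m, g p q :=
    Finset.sum_comm
  rw [h3, h4] at h2; linarith

lemma alt_sum_zero {α : Type*} [DecidableEq α] (f : Finset α → ℝ) (V : Finset α) (k : α)
    (hk : k ∈ V) (hf : ∀ I ⊆ V.erase k, f (insert k I) = f I) :
    ∑ I ∈ V.powerset, (-1 : ℝ) ^ I.card * f I = 0 := by
  rw [← Finset.insert_erase hk, Finset.sum_powerset_insert (Finset.notMem_erase k V),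
    ← Finset.sum_add_distrib]
  apply Finset.sum_eq_zero
  intro I hI
  have hIV := Finset.mem_powerset.mp hI
  have hIk : k ∉ I := fun h => Finset.notMem_erase k V (hIV h)
  rw [hf I hIV, Finset.card_insert_of_notMem hIk, pow_succ]
  ring

lemma exists_avoid {α : Type*} [DecidableEq α] (V : Finset α) (hV : 3 ≤ V.card) (x y : α) :
    ∃ k ∈ V, k ≠ x ∧ k ≠ y := by
  have h2 : (({x, y} : Finset α)).card ≤ 2 :=
    (Finset.card_insert_le x {y}).trans (by simp)
  have h1 : V.card ≤ (V \ {x, y}).card + ({x, y} : Finset α).card := by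
    refine le_trans (Finset.card_le_card (fun a ha => ?_)) (Finset.card_union_le _ _)
    by_cases h : a ∈ ({x, y} : Finset α)
    · simp only [Finset.mem_insert, Finset.mem_singleton] at h
      simp [Finset.mem_union, h, ha]
    · simp [Finset.mem_union, Finset.mem_sdiff, ha, h]
  have hpos : 0 < (V \ {x, y}).card := by omega
  obtain ⟨k, hk⟩ := Finset.card_pos.mp hpos
  rw [Finset.mem_sdiff, Finset.mem_insert, Finset.mem_singleton] at hk
  exact ⟨k, hk.1, fun h => hk.2 (Or.inl h), fun h => hk.2 (Or.inr h)⟩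

lemma alt_sum_zero' {α : Type*} [DecidableEq α] (f : Finset α → ℝ) (V : Finset α)
    (hV : 3 ≤ V.card) (x y : α)
    (hf : ∀ k, k ≠ x → k ≠ y → ∀ I, k ∉ I → f (insert k I) = f I) :
    ∑ I ∈ V.powerset, (-1 : ℝ) ^ I.card * f I = 0 := by
  obtain ⟨k, hk, hkx, hky⟩ := exists_avoid V hV x y
  exact alt_sum_zero f V k hk fun I hI =>
    hf k hkx hky I (fun h => Finset.notMem_erase k V (hI h))

def pinv {n : ℕ} (hn : 1 ≤ n) (p : Fin (n + 1)) : Fin n :=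
  if h : (p : ℕ) < n then ⟨p, h⟩ else ⟨0, hn⟩

lemma ne_pinv_castSucc {n : ℕ} (hn : 1 ≤ n) (p : Fin (n + 1)) (k : Fin n)
    (hk : k ≠ pinv hn p) : Fin.castSucc k ≠ p := by
  intro h; apply hk; subst h
  simp [pinv, k.isLt]
noncomputable def aW {n : ℕ} (s : Finset (Fin n) → ℝ) (i j : Fin n) : ℝ :=
  if i = j then 0 else (s {i} + s {j} - s {i, j}) / 2

lemma aW_symm {n : ℕ} (s : Finset (Fin n) → ℝ) (i j : Fin n) : aW s i j = aW s j i := by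
  unfold aW
  rcases eq_or_ne i j with rfl | h
  · simp
  · rw [if_neg h, if_neg (Ne.symm h), Finset.pair_comm j i]; ring

lemma aW_diag {n : ℕ} (s : Finset (Fin n) → ℝ) (i : Fin n) : aW s i i = 0 := if_pos rfl

lemma star_formula {n : ℕ} (s : Finset (Fin n) → ℝ) (hs : s ∅ = 0)
    (h3 : ∀ V : Finset (Fin n), 3 ≤ V.card →
      ∑ I ∈ V.powerset, (-1 : ℝ) ^ I.card * s I = 0)
    (V : Finset (Fin n)) :
    s V = ∑ i ∈ V, s {i} - ∑ i ∈ V, ∑ j ∈ V, aW s i j := by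
  induction V using Finset.strongInduction with
  | _ V ih =>
  rcases lt_or_ge V.card 3 with hc | hc
  · have h0 : V.card = 0 ∨ V.card = 1 ∨ V.card = 2 := by omega
    rcases h0 with h | h | h
    · rw [Finset.card_eq_zero.mp h]; simp [hs]
    · obtain ⟨x, rfl⟩ := Finset.card_eq_one.mp h
      simp [aW]
    · obtain ⟨x, y, hxy, rfl⟩ := Finset.card_eq_two.mp h
      have hyx : ¬ (y = x) := fun h' => hxy h'.symm
      simp only [Finset.sum_pair hxy]
      rw [aW_diag, aW_diag, aW_symm s y x, show aW s x y = (s {x} + s {y} - s {x, y}) / 2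
        from if_neg hxy]
      ring
  · -- inductive case
    have hF : ∑ I ∈ V.powerset, (-1 : ℝ) ^ I.card *
        ((∑ i ∈ I, s {i}) - ∑ i ∈ I, ∑ j ∈ I, aW s i j) = 0 := by
      have conv1 : ∀ I : Finset (Fin n),
          (∑ i ∈ I, s {i}) = ∑ i : Fin n, if i ∈ I then s {i} else 0 := by
        intro I; rw [Finset.sum_ite_mem, Finset.univ_inter]
      have conv2 : ∀ I : Finset (Fin n),
          (∑ i ∈ I, ∑ j ∈ I, aW s i j)
            = ∑ i : Fin n, ∑ j : Fin n, if i ∈ I ∧ j ∈ I then aW s i j else 0 := by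
        intro I
        have : ∀ i : Fin n, (∑ j : Fin n, if i ∈ I ∧ j ∈ I then aW s i j else 0)
            = if i ∈ I then ∑ j ∈ I, aW s i j else 0 := by
          intro i
          by_cases hi : i ∈ I
          · simp only [hi, true_and, if_true]
            rw [Finset.sum_ite_mem, Finset.univ_inter]
          · simp [hi]
        rw [Finset.sum_congr rfl (fun i _ => this i), Finset.sum_ite_mem, Finset.univ_inter]
      simp only [conv1, conv2, mul_sub, Finset.mul_sum]
      rw [Finset.sum_sub_distrib]
      have hA : ∑ I ∈ V.powerset, ∑ i : Fin n,
          (-1 : ℝ) ^ I.card * (if i ∈ I then s {i} else 0) = 0 := by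
        rw [Finset.sum_comm]
        apply Finset.sum_eq_zero
        intro i _
        apply alt_sum_zero' _ V hc i i
        intro k hk _ I _
        simp [Finset.mem_insert, Ne.symm hk]
      have hB : ∑ I ∈ V.powerset, ∑ i : Fin n, ∑ j : Fin n,
          (-1 : ℝ) ^ I.card * (if i ∈ I ∧ j ∈ I then aW s i j else 0) = 0 := by
        rw [Finset.sum_comm]
        apply Finset.sum_eq_zero
        intro i _
        rw [Finset.sum_comm]
        apply Finset.sum_eq_zero
        intro j _
        apply alt_sum_zero' _ V hc i j
        intro k hki hkj I _
        simp [Finset.mem_insert, Ne.symm hki, Ne.symm hkj]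
      rw [hA, hB, sub_zero]
    have hS := h3 V hc
    have key : ∑ I ∈ V.powerset, (-1 : ℝ) ^ I.card *
        (s I - ((∑ i ∈ I, s {i}) - ∑ i ∈ I, ∑ j ∈ I, aW s i j)) = 0 := by
      rw [Finset.sum_congr rfl (fun I (_ : I ∈ V.powerset) => by
        ring : ∀ I ∈ V.powerset, (-1 : ℝ) ^ I.card *
          (s I - ((∑ i ∈ I, s {i}) - ∑ i ∈ I, ∑ j ∈ I, aW s i j))
          = (-1 : ℝ) ^ I.card * s I - (-1 : ℝ) ^ I.card *
            ((∑ i ∈ I, s {i}) - ∑ i ∈ I, ∑ j ∈ I, aW s i j))]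
      rw [Finset.sum_sub_distrib, hS, hF, sub_zero]
    have key2 : (-1 : ℝ) ^ V.card *
        (s V - ((∑ i ∈ V, s {i}) - ∑ i ∈ V, ∑ j ∈ V, aW s i j)) = 0 := by
      rw [← key]
      symm
      apply Finset.sum_eq_single_of_mem V (Finset.mem_powerset_self V)
      intro I hI hIV
      have hss : I ⊂ V := (Finset.mem_powerset.mp hI).ssubset_of_ne hIV
      rw [ih I hss]; ring
    have hne : ((-1 : ℝ) ^ V.card) ≠ 0 := pow_ne_zero _ (by norm_num)
    have := mul_eq_zero.mp key2
    rcases this with h | h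
    · exact absurd h hne
    · linarith
lemma b_eq {n : ℕ} (s : Finset (Fin n) → ℝ) (hs : s ∅ = 0)
    (h3 : ∀ V : Finset (Fin n), 3 ≤ V.card →
      ∑ I ∈ V.powerset, (-1 : ℝ) ^ I.card * s I = 0) (i : Fin n) :
    (s {i} + s Finset.univ - s (Finset.univ \ {i})) / 2
      = s {i} - ∑ j : Fin n, aW s i j := by
  have hU := star_formula s hs h3 Finset.univ
  have hE := star_formula s hs h3 (Finset.univ.erase i)
  rw [show (Finset.univ \ {i} : Finset (Fin n)) = Finset.univ.erase i from
    (Finset.erase_eq _ _).symm]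
  set E := Finset.univ.erase i with hEdef
  -- single sums
  have h1 : ∑ k : Fin n, s {k} = s {i} + ∑ k ∈ E, s {k} :=
    (Finset.add_sum_erase _ _ (Finset.mem_univ i)).symm
  have h2 : ∑ q : Fin n, aW s i q = ∑ q ∈ E, aW s i q := by
    rw [← Finset.add_sum_erase _ _ (Finset.mem_univ i), aW_diag, zero_add]
  have h4 : ∑ p : Fin n, ∑ q : Fin n, aW s p q
      = (∑ q : Fin n, aW s i q) + ∑ p ∈ E, ∑ q : Fin n, aW s p q :=
    (Finset.add_sum_erase _ _ (Finset.mem_univ i)).symm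
  have h5 : ∀ p : Fin n, ∑ q : Fin n, aW s p q = aW s p i + ∑ q ∈ E, aW s p q :=
    fun p => (Finset.add_sum_erase _ _ (Finset.mem_univ i)).symm
  have h6 : ∑ p ∈ E, ∑ q : Fin n, aW s p q
      = (∑ p ∈ E, aW s p i) + ∑ p ∈ E, ∑ q ∈ E, aW s p q := by
    rw [← Finset.sum_add_distrib]
    exact Finset.sum_congr rfl fun p _ => h5 p
  have h7 : ∑ p ∈ E, aW s p i = ∑ p ∈ E, aW s i p :=
    Finset.sum_congr rfl fun p _ => aW_symm s p i
  rw [h4, h2, h6, h7] at hU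
  rw [h1] at hU
  linarith

noncomputable def wW {n : ℕ} (s : Finset (Fin n) → ℝ) (p q : Fin (n + 1)) : ℝ :=
  if hp : (p : ℕ) < n then
    (if hq : (q : ℕ) < n then aW s ⟨p, hp⟩ ⟨q, hq⟩
     else (s {(⟨p, hp⟩ : Fin n)} + s Finset.univ
       - s (Finset.univ \ {(⟨p, hp⟩ : Fin n)})) / 2)
  else if hq : (q : ℕ) < n then
    (s {(⟨q, hq⟩ : Fin n)} + s Finset.univ - s (Finset.univ \ {(⟨q, hq⟩ : Fin n)})) / 2
  else 0

lemma wW_cast_cast {n : ℕ} (s : Finset (Fin n) → ℝ) (i j : Fin n) :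
    wW s (Fin.castSucc i) (Fin.castSucc j) = aW s i j := by
  simp [wW, i.isLt, j.isLt]

lemma wW_cast_last {n : ℕ} (s : Finset (Fin n) → ℝ) (i : Fin n) :
    wW s (Fin.castSucc i) (Fin.last n)
      = (s {i} + s Finset.univ - s (Finset.univ \ {i})) / 2 := by
  simp [wW, i.isLt]

lemma compl_map {n : ℕ} (I : Finset (Fin n)) :
    (I.map ⟨Fin.castSucc, Fin.castSucc_injective n⟩)ᶜ
      = insert (Fin.last n) (Iᶜ.map ⟨Fin.castSucc, Fin.castSucc_injective n⟩) := by
  ext x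
  simp only [Finset.mem_compl, Finset.mem_map, Finset.mem_insert,
    Function.Embedding.coeFn_mk]
  induction x using Fin.lastCases with
  | last => simp [fun a : Fin n => (Fin.castSucc_lt_last a).ne]
  | cast a =>
    simp [Fin.castSucc_inj, (Fin.castSucc_lt_last a).ne]
set_option maxHeartbeats 2000000 in
/-- Main theorem. A function `s` on subsets of `Fin n` with `s ∅ = 0`
is the cut function of some weight function on `n+1` vertices (restricted to subsets of the
first `n` vertices) if and only if it satisfies subadditivity, the Araki–Lieb inequality,
and the multivariate information equalities. -/
theorem areaLaw_entropy_cone_characterization (n : ℕ) (hn : 1 ≤ n)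
    (s : Finset (Fin n) → ℝ) (hs : s ∅ = 0) :
    (∃ w : Fin (n + 1) → Fin (n + 1) → ℝ, IsWeight w ∧
        ∀ I : Finset (Fin n), s I = cut w (I.map ⟨Fin.castSucc, Fin.castSucc_injective n⟩)) ↔
      ((∀ i j : Fin n, i ≠ j → s {i, j} ≤ s {i} + s {j}) ∧
       (∀ i : Fin n, s (Finset.univ \ {i}) ≤ s {i} + s Finset.univ) ∧
       ∀ V : Finset (Fin n), 3 ≤ V.card →
         ∑ I ∈ V.powerset, (-1 : ℝ) ^ I.card * s I = 0) := by
  constructor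
  · rintro ⟨w, ⟨hsym, hpos, hdiag⟩, h⟩
    have combine : ∀ f g k : Fin (n + 1) → Fin (n + 1) → ℝ,
        (∑ p : Fin (n + 1), ∑ q : Fin (n + 1), f p q)
          + (∑ p : Fin (n + 1), ∑ q : Fin (n + 1), g p q)
          - (∑ p : Fin (n + 1), ∑ q : Fin (n + 1), k p q)
        = ∑ p : Fin (n + 1), ∑ q : Fin (n + 1), (f p q + g p q - k p q) := by
      intro f g k
      rw [← Finset.sum_add_distrib, ← Finset.sum_sub_distrib]
      refine Finset.sum_congr rfl fun p _ => ?_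
      rw [← Finset.sum_add_distrib, ← Finset.sum_sub_distrib]
    refine ⟨?_, ?_, ?_⟩
    · -- subadditivity
      intro i j hij
      rw [← sub_nonneg, h, h, h, cut_expand, cut_expand, cut_expand, combine]
      apply sum_sum_nonneg
      intro p q
      have hij' : Fin.castSucc i ≠ Fin.castSucc j := by
        simpa [Fin.castSucc_inj] using hij
      simp only [Finset.mem_map, Finset.mem_singleton, Finset.mem_insert,
        Function.Embedding.coeFn_mk, exists_eq_left]
      have h1 := hpos p q
      have h2 := hpos q p
      have h3 := hsym p q
      have h7 : ∀ x : Fin (n + 1),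
          (∃ a : Fin n, (a = i ∨ a = j) ∧ Fin.castSucc a = x)
            ↔ (Fin.castSucc i = x ∨ Fin.castSucc j = x) := by
        intro x
        constructor
        · rintro ⟨a, (rfl | rfl), rfl⟩
          · exact Or.inl rfl
          · exact Or.inr rfl
        · rintro (rfl | rfl)
          · exact ⟨i, Or.inl rfl, rfl⟩
          · exact ⟨j, Or.inr rfl, rfl⟩
      simp only [h7]
      split_ifs <;> first | linarith | tauto
    · -- Araki-Lieb
      intro i
      rw [← sub_nonneg, h, h, h, cut_expand, cut_expand, cut_expand, combine]
      apply sum_sum_nonneg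
      intro p q
      simp only [Finset.mem_map, Finset.mem_singleton, Finset.mem_sdiff,
        Finset.mem_univ, true_and, Function.Embedding.coeFn_mk, exists_eq_left]
      have h1 := hpos p q
      have h2 := hpos q p
      have h3 := hsym p q
      have h4 : Fin.castSucc i = p → ∃ a : Fin n, Fin.castSucc a = p := fun hh => ⟨i, hh⟩
      have h5 : Fin.castSucc i = q → ∃ a : Fin n, Fin.castSucc a = q := fun hh => ⟨i, hh⟩
      have h6 : ∀ x : Fin (n + 1), (∃ a : Fin n, ¬ a = i ∧ Fin.castSucc a = x) ↔
          ((∃ a : Fin n, Fin.castSucc a = x) ∧ ¬ Fin.castSucc i = x) := by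
        intro x
        constructor
        · rintro ⟨a, ha, rfl⟩
          exact ⟨⟨a, rfl⟩, by simpa [Fin.castSucc_inj] using fun hh => ha hh.symm⟩
        · rintro ⟨⟨a, rfl⟩, hne⟩
          exact ⟨a, fun hh => hne (by rw [hh]), rfl⟩
      simp only [h6]
      split_ifs <;> first | linarith | tauto
    · -- multivariate information equalities
      intro V hV
      have hrw : ∀ I : Finset (Fin n), s I
          = ∑ p : Fin (n + 1), ∑ q : Fin (n + 1),
              (if p ∈ I.map ⟨Fin.castSucc, Fin.castSucc_injective n⟩
                  ∧ q ∉ I.map ⟨Fin.castSucc, Fin.castSucc_injective n⟩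
                then w p q else 0) :=
        fun I => by rw [h, cut_expand]
      calc ∑ I ∈ V.powerset, (-1 : ℝ) ^ I.card * s I
          = ∑ p : Fin (n + 1), ∑ q : Fin (n + 1), ∑ I ∈ V.powerset,
              (-1 : ℝ) ^ I.card *
              (if p ∈ I.map ⟨Fin.castSucc, Fin.castSucc_injective n⟩
                  ∧ q ∉ I.map ⟨Fin.castSucc, Fin.castSucc_injective n⟩
                then w p q else 0) := by
            simp only [hrw, Finset.mul_sum]
            rw [Finset.sum_comm]
            exact Finset.sum_congr rfl fun p _ => Finset.sum_comm
        _ = 0 := by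
            apply Finset.sum_eq_zero; intro p _
            apply Finset.sum_eq_zero; intro q _
            apply alt_sum_zero' _ V hV (pinv hn p) (pinv hn q)
            intro k hkp hkq I hkI
            have hp := ne_pinv_castSucc hn p k hkp
            have hq := ne_pinv_castSucc hn q k hkq
            rw [Finset.map_insert]
            simp [Finset.mem_insert, Ne.symm hp, Ne.symm hq]
  · rintro ⟨h1, h2, h3⟩
    refine ⟨wW s, ⟨?_, ?_, ?_⟩, ?_⟩
    · -- symmetric
      intro p q
      by_cases hp : (p : ℕ) < n <;> by_cases hq : (q : ℕ) < n <;>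
        simp [wW, hp, hq]
      exact aW_symm s _ _
    · -- nonneg
      intro p q
      by_cases hp : (p : ℕ) < n <;> by_cases hq : (q : ℕ) < n <;>
        simp [wW, hp, hq]
      · rcases eq_or_ne (⟨p, hp⟩ : Fin n) ⟨q, hq⟩ with he | he
        · rw [he, aW_diag]
        · rw [show aW s ⟨p, hp⟩ ⟨q, hq⟩
            = (s {(⟨p, hp⟩ : Fin n)} + s {(⟨q, hq⟩ : Fin n)}
              - s {(⟨p, hp⟩ : Fin n), (⟨q, hq⟩ : Fin n)}) / 2 from if_neg he]
          have := h1 ⟨p, hp⟩ ⟨q, hq⟩ he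
          linarith
      · have := h2 ⟨p, hp⟩; linarith
      · have := h2 ⟨q, hq⟩; linarith
    · -- diagonal
      intro p
      by_cases hp : (p : ℕ) < n <;> simp [wW, hp, aW_diag]
    · -- cut identity
      intro I
      show s I = ∑ x ∈ I.map ⟨Fin.castSucc, Fin.castSucc_injective n⟩,
        ∑ y ∈ (I.map ⟨Fin.castSucc, Fin.castSucc_injective n⟩)ᶜ, wW s x y
      rw [compl_map, Finset.sum_map]
      have hlast : Fin.last n ∉ Iᶜ.map ⟨Fin.castSucc, Fin.castSucc_injective n⟩ := by
        simp [fun a : Fin n => (Fin.castSucc_lt_last a).ne]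
      simp only [Function.Embedding.coeFn_mk, Finset.sum_insert hlast, Finset.sum_map,
        wW_cast_cast, wW_cast_last]
      rw [star_formula s hs h3 I, ← Finset.sum_sub_distrib]
      refine Finset.sum_congr rfl fun i hi => ?_
      rw [b_eq s hs h3 i]
      have hsplit := Finset.sum_add_sum_compl I (fun j => aW s i j)
      linarith
end

section
/- Let n ≥ 3, let G be a simple graph on the vertex set Fin n, and let w be a weight function on n+1 vertices such that w i j = 0 whenever i, j are distinct vertices among the first n vertices that are not adjacent in G. Then ∑_{I ⊆ Fin n} (−1)^{|I|} ∑_{J ∈ π₀(I)} δ_w(J) = 0, where π₀(I) denotes the set of vertex sets of the connected components of the subgraph of G induced on I, and each such J is viewed as a subset of Fin (n+1) via the natural embedding. -/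
open Classical in
/-- The vertex set of the connected component of `v` in the subgraph of `G` induced on
the vertex set `I`: all `u ∈ I` reachable from `v` by a path staying inside `I`. -/
noncomputable def compOf {n : ℕ} (G : SimpleGraph (Fin n)) (I : Finset (Fin n))
    (v : Fin n) : Finset (Fin n) :=
  I.filter (fun u => Relation.ReflTransGen (fun a b => a ∈ I ∧ b ∈ I ∧ G.Adj a b) v u)

/-- `π₀(I)`: the set of vertex sets of the connected components of the subgraph of `G`
induced on `I`. -/
noncomputable def pi0 {n : ℕ} (G : SimpleGraph (Fin n)) (I : Finset (Fin n)) :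
    Finset (Finset (Fin n)) :=
  I.image (compOf G I)

/-! ### Auxiliary material -/

/-- The canonical embedding `Fin n ↪ Fin (n+1)`. -/
def aceEmb (n : ℕ) : Fin n ↪ Fin (n + 1) := ⟨Fin.castSucc, Fin.castSucc_injective n⟩

namespace ACE

variable {n : ℕ} {G : SimpleGraph (Fin n)} {I : Finset (Fin n)}

lemma mem_map_emb {J : Finset (Fin n)} {a : Fin n} :
    Fin.castSucc a ∈ J.map (aceEmb n) ↔ a ∈ J := by
  rw [show Fin.castSucc a = aceEmb n a from rfl, Finset.mem_map']

lemma last_not_mem_map {J : Finset (Fin n)} : Fin.last n ∉ J.map (aceEmb n) := by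
  simp only [Finset.mem_map, not_exists]
  rintro x ⟨-, hx⟩
  exact (Fin.castSucc_lt_last x).ne hx

lemma relSymm : Symmetric (fun a b => a ∈ I ∧ b ∈ I ∧ G.Adj a b) := by
  rintro a b ⟨h1, h2, h3⟩; exact ⟨h2, h1, h3.symm⟩

open Classical in
lemma mem_compOf {u v : Fin n} :
    u ∈ compOf G I v ↔ u ∈ I ∧
      Relation.ReflTransGen (fun a b => a ∈ I ∧ b ∈ I ∧ G.Adj a b) v u := by
  rw [compOf, Finset.mem_filter]

open Classical in
lemma compOf_subset (v : Fin n) : compOf G I v ⊆ I := Finset.filter_subset _ _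

lemma mem_compOf_self {v : Fin n} (hv : v ∈ I) : v ∈ compOf G I v :=
  mem_compOf.mpr ⟨hv, Relation.ReflTransGen.refl⟩

lemma compOf_eq_of_mem {u v : Fin n} (hu : u ∈ compOf G I v) :
    compOf G I u = compOf G I v := by
  obtain ⟨huI, hvu⟩ := mem_compOf.mp hu
  have hsymm : Symmetric (Relation.ReflTransGen (fun a b => a ∈ I ∧ b ∈ I ∧ G.Adj a b)) :=
    fun _ _ h => (@Relation.ReflTransGen.symmetric _ _
      ⟨fun _ _ h => relSymm (G := G) (I := I) h⟩).symm _ _ h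
  ext x
  rw [mem_compOf, mem_compOf]
  exact ⟨fun ⟨hx, h⟩ => ⟨hx, hvu.trans h⟩, fun ⟨hx, h⟩ => ⟨hx, (hsymm hvu).trans h⟩⟩

lemma pi0_subset {J : Finset (Fin n)} (hJ : J ∈ pi0 G I) : J ⊆ I := by
  obtain ⟨x, -, rfl⟩ := Finset.mem_image.mp hJ
  exact compOf_subset x

lemma eq_compOf_of_mem_pi0 {J : Finset (Fin n)} {a : Fin n} (hJ : J ∈ pi0 G I)
    (ha : a ∈ J) : J = compOf G I a := by
  obtain ⟨x, -, rfl⟩ := Finset.mem_image.mp hJ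
  exact (compOf_eq_of_mem ha).symm

lemma compOf_mem_pi0 {a : Fin n} (ha : a ∈ I) : compOf G I a ∈ pi0 G I :=
  Finset.mem_image_of_mem _ ha

/-- Evaluation of the component indicator sum: pair `(a, last)`. -/
lemma eval_last (a : Fin n) :
    (∑ J ∈ pi0 G I,
        if Fin.castSucc a ∈ J.map (aceEmb n) ∧ Fin.last n ∉ J.map (aceEmb n)
        then (1 : ℝ) else 0)
      = if a ∈ I then 1 else 0 := by
  by_cases ha : a ∈ I
  · rw [if_pos ha, Finset.sum_eq_single (compOf G I a)]
    · rw [if_pos ⟨mem_map_emb.mpr (mem_compOf_self ha), last_not_mem_map⟩]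
    · intro J hJ hne
      rw [if_neg]
      rintro ⟨h1, -⟩
      exact hne (eq_compOf_of_mem_pi0 hJ (mem_map_emb.mp h1))
    · intro h; exact absurd (compOf_mem_pi0 ha) h
  · rw [if_neg ha]
    apply Finset.sum_eq_zero
    intro J hJ
    rw [if_neg]
    rintro ⟨h1, -⟩
    exact ha (pi0_subset hJ (mem_map_emb.mp h1))

/-- Evaluation of the component indicator sum: adjacent pair `(a, b)`. -/
lemma eval_adj {a b : Fin n} (hab : G.Adj a b) :
    (∑ J ∈ pi0 G I,
        if Fin.castSucc a ∈ J.map (aceEmb n) ∧ Fin.castSucc b ∉ J.map (aceEmb n)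
        then (1 : ℝ) else 0)
      = if a ∈ I ∧ b ∉ I then 1 else 0 := by
  by_cases ha : a ∈ I
  · rw [Finset.sum_eq_single (compOf G I a)]
    · by_cases hb : b ∈ I
      · rw [if_neg, if_neg]
        · rintro ⟨-, h2⟩; exact h2 hb
        · rintro ⟨-, h2⟩
          exact h2 (mem_map_emb.mpr
            (mem_compOf.mpr ⟨hb, Relation.ReflTransGen.single ⟨ha, hb, hab⟩⟩))
      · rw [if_pos ⟨mem_map_emb.mpr (mem_compOf_self ha), fun h =>
            hb (compOf_subset a (mem_map_emb.mp h))⟩, if_pos ⟨ha, hb⟩]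
    · intro J hJ hne
      rw [if_neg]
      rintro ⟨h1, -⟩
      exact hne (eq_compOf_of_mem_pi0 hJ (mem_map_emb.mp h1))
    · intro h; exact absurd (compOf_mem_pi0 ha) h
  · rw [if_neg fun h => ha h.1]
    apply Finset.sum_eq_zero
    intro J hJ
    rw [if_neg]
    rintro ⟨h1, -⟩
    exact ha (pi0_subset hJ (mem_map_emb.mp h1))

/-- Cancellation: a `±1`-weighted sum of an indicator insensitive to a vertex `c`. -/
lemma sign_sum_zero (p : Finset (Fin n) → Prop) [DecidablePred p] (c : Fin n)
    (hp : ∀ I : Finset (Fin n), c ∉ I → (p (insert c I) ↔ p I)) :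
    ∑ I : Finset (Fin n), (-1 : ℝ) ^ I.card * (if p I then 1 else 0) = 0 := by
  apply Finset.sum_involution (fun I _ => if c ∈ I then I.erase c else insert c I)
  · intro I _
    by_cases hc : c ∈ I
    · rw [if_pos hc]
      have h1 : p (I.erase c) ↔ p I := by
        have h0 := hp (I.erase c) (Finset.notMem_erase c I)
        rw [Finset.insert_erase hc] at h0
        exact h0.symm
      rw [(Finset.card_erase_add_one hc).symm, pow_succ, if_congr h1 rfl rfl]
      ring
    · rw [if_neg hc, Finset.card_insert_of_notMem hc, pow_succ,
        if_congr (hp I hc) rfl rfl]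
      ring
  · intro I _ _
    by_cases hc : c ∈ I
    · rw [if_pos hc]
      intro h
      exact (Finset.erase_eq_self.mp h) hc
    · rw [if_neg hc]
      intro h
      exact hc (Finset.insert_eq_self.mp h)
  · intro I _
    by_cases hc : c ∈ I
    · rw [if_pos hc, if_neg (Finset.notMem_erase c I), Finset.insert_erase hc]
    · rw [if_neg hc, if_pos (Finset.mem_insert_self c I), Finset.erase_insert hc]
  · intro I _; exact Finset.mem_univ _

lemma exists_third (hn : 3 ≤ n) (a b : Fin n) : ∃ c : Fin n, c ≠ a ∧ c ≠ b := by
  by_contra h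
  push_neg at h
  have hsub : (Finset.univ : Finset (Fin n)) ⊆ {a, b} := by
    intro c _
    rcases Classical.em (c = a) with h1 | h1
    · simp [h1]
    · simp [h c h1]
  have := Finset.card_le_card hsub
  rw [Finset.card_univ, Fintype.card_fin] at this
  have h2 : ({a, b} : Finset (Fin n)).card ≤ 2 :=
    le_trans (Finset.card_insert_le _ _) (by simp)
  omega

lemma T_single (hn : 3 ≤ n) (a : Fin n) :
    ∑ I : Finset (Fin n), (-1 : ℝ) ^ I.card * (if a ∈ I then 1 else 0) = 0 := by
  obtain ⟨c, hca, -⟩ := exists_third hn a a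
  exact sign_sum_zero (fun I => a ∈ I) c
    (fun I _ => by simp [Finset.mem_insert, hca.symm])

lemma T_pair (hn : 3 ≤ n) (a b : Fin n) :
    ∑ I : Finset (Fin n), (-1 : ℝ) ^ I.card * (if a ∈ I ∧ b ∉ I then 1 else 0) = 0 := by
  obtain ⟨c, hca, hcb⟩ := exists_third hn a b
  exact sign_sum_zero (fun I => a ∈ I ∧ b ∉ I) c
    (fun I _ => by simp [Finset.mem_insert, hca.symm, hcb.symm])

end ACE

/-- constrained entropy equalities from graphs. Let `G` be a simple
graph on `Fin n` (`n ≥ 3`) and `w` a weight function on `n+1` vertices vanishing between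
distinct non-adjacent vertices among the first `n`. Then
`∑_{I ⊆ Fin n} (−1)^{|I|} ∑_{J ∈ π₀(I)} δ_w(J) = 0`. -/
theorem graph_constrained_entropy_equality (n : ℕ) (hn : 3 ≤ n)
    (G : SimpleGraph (Fin n)) (w : Fin (n + 1) → Fin (n + 1) → ℝ) (hw : IsWeight w)
    (hGw : ∀ i j : Fin n, i ≠ j → ¬ G.Adj i j → w (Fin.castSucc i) (Fin.castSucc j) = 0) :
    ∑ I : Finset (Fin n), (-1 : ℝ) ^ I.card *
      ∑ J ∈ pi0 G I, cut w (J.map ⟨Fin.castSucc, Fin.castSucc_injective n⟩) = 0 := by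
  have hembeq : (⟨Fin.castSucc, Fin.castSucc_injective n⟩ : Fin n ↪ Fin (n + 1)) =
      aceEmb n := rfl
  simp only [hembeq]
  -- Step 1: rewrite `cut` as a full double sum with indicators.
  have hcut : ∀ S : Finset (Fin (n + 1)), cut w S
      = ∑ i : Fin (n + 1), ∑ j : Fin (n + 1), if i ∈ S ∧ j ∉ S then w i j else 0 := by
    intro S
    rw [cut]
    have h1 : ∀ i : Fin (n + 1),
        ∑ j ∈ Sᶜ, w i j = ∑ j : Fin (n + 1), if j ∉ S then w i j else 0 := by
      intro i
      have h := Finset.sum_ite_mem Finset.univ Sᶜ (w i)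
      rw [Finset.univ_inter] at h
      rw [← h]
      exact Finset.sum_congr rfl (fun j _ => if_congr Finset.mem_compl rfl rfl)
    have h2 := Finset.sum_ite_mem Finset.univ S
      (fun i => ∑ j : Fin (n + 1), if j ∉ S then w i j else 0)
    rw [Finset.univ_inter] at h2
    rw [Finset.sum_congr rfl (fun i _ => h1 i), ← h2]
    refine Finset.sum_congr rfl (fun i _ => ?_)
    by_cases hi : i ∈ S
    · simp [hi]
    · simp [hi]
  -- Step 2: per-`I` expansion of the component sum of cuts.
  have hI : ∀ I : Finset (Fin n),
      (∑ J ∈ pi0 G I, cut w (J.map (aceEmb n)))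
        = ∑ i : Fin (n + 1), ∑ j : Fin (n + 1),
            (∑ J ∈ pi0 G I,
              if i ∈ J.map (aceEmb n) ∧ j ∉ J.map (aceEmb n) then (1 : ℝ) else 0)
              * w i j := by
    intro I
    calc ∑ J ∈ pi0 G I, cut w (J.map (aceEmb n))
        = ∑ J ∈ pi0 G I, ∑ i : Fin (n + 1), ∑ j : Fin (n + 1),
            if i ∈ J.map (aceEmb n) ∧ j ∉ J.map (aceEmb n) then w i j else 0 :=
          Finset.sum_congr rfl (fun J _ => hcut _)
      _ = ∑ i : Fin (n + 1), ∑ J ∈ pi0 G I, ∑ j : Fin (n + 1),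
            if i ∈ J.map (aceEmb n) ∧ j ∉ J.map (aceEmb n) then w i j else 0 :=
          Finset.sum_comm
      _ = ∑ i : Fin (n + 1), ∑ j : Fin (n + 1), ∑ J ∈ pi0 G I,
            if i ∈ J.map (aceEmb n) ∧ j ∉ J.map (aceEmb n) then w i j else 0 :=
          Finset.sum_congr rfl (fun i _ => Finset.sum_comm)
      _ = ∑ i : Fin (n + 1), ∑ j : Fin (n + 1),
            (∑ J ∈ pi0 G I,
              if i ∈ J.map (aceEmb n) ∧ j ∉ J.map (aceEmb n) then (1 : ℝ) else 0)
              * w i j := by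
          refine Finset.sum_congr rfl (fun i _ => Finset.sum_congr rfl (fun j _ => ?_))
          rw [Finset.sum_mul]
          refine Finset.sum_congr rfl (fun J _ => ?_)
          by_cases h : i ∈ J.map (aceEmb n) ∧ j ∉ J.map (aceEmb n) <;> simp [h]
  -- Step 3: reorder the sums and kill each pair `(i, j)`.
  rw [Finset.sum_congr rfl (fun I _ => by rw [hI I])]
  rw [Finset.sum_congr rfl (fun I (_ : I ∈ Finset.univ) => Finset.mul_sum _ _ _)]
  rw [Finset.sum_comm]
  refine Finset.sum_eq_zero (fun i _ => ?_)
  rw [Finset.sum_congr rfl (fun I (_ : I ∈ Finset.univ) => Finset.mul_sum _ _ _)]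
  rw [Finset.sum_comm]
  refine Finset.sum_eq_zero (fun j _ => ?_)
  have key : ∀ I : Finset (Fin n),
      (-1 : ℝ) ^ I.card *
        ((∑ J ∈ pi0 G I,
            if i ∈ J.map (aceEmb n) ∧ j ∉ J.map (aceEmb n) then (1 : ℝ) else 0) * w i j)
      = ((-1 : ℝ) ^ I.card *
          (∑ J ∈ pi0 G I,
            if i ∈ J.map (aceEmb n) ∧ j ∉ J.map (aceEmb n) then (1 : ℝ) else 0)) * w i j :=
    fun I => by ring
  rw [Finset.sum_congr rfl (fun I _ => key I), ← Finset.sum_mul]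
  induction i using Fin.lastCases with
  | last =>
    have hz : ∀ I : Finset (Fin n),
        (∑ J ∈ pi0 G I,
          if Fin.last n ∈ J.map (aceEmb n) ∧ j ∉ J.map (aceEmb n) then (1 : ℝ) else 0)
          = 0 := by
      intro I
      exact Finset.sum_eq_zero (fun J _ => if_neg (fun h => ACE.last_not_mem_map h.1))
    rw [Finset.sum_congr rfl (fun I _ => by rw [hz I])]
    simp
  | cast a =>
    induction j using Fin.lastCases with
    | last =>
      rw [Finset.sum_congr rfl (fun I _ => by rw [ACE.eval_last a]), ACE.T_single hn a,
        zero_mul]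
    | cast b =>
      by_cases hab : a = b
      · subst hab
        have hz : ∀ I : Finset (Fin n),
            (∑ J ∈ pi0 G I,
              if Fin.castSucc a ∈ J.map (aceEmb n) ∧ Fin.castSucc a ∉ J.map (aceEmb n)
              then (1 : ℝ) else 0) = 0 :=
          fun I => Finset.sum_eq_zero (fun J _ => if_neg (fun h => h.2 h.1))
        rw [Finset.sum_congr rfl (fun I _ => by rw [hz I])]
        simp
      · by_cases hadj : G.Adj a b
        · rw [Finset.sum_congr rfl (fun I _ => by rw [ACE.eval_adj hadj]),
            ACE.T_pair hn a b, zero_mul]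
        · rw [hGw a b hab hadj, mul_zero]
end
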